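/- Under hypotheses H(A), H(J), H(γ,f) and (H_s), for every fixed w ∈ V the functional v ↦ ℒ(w,v) = F_A(v) − ⟨f,v⟩ + J(γw, γv) is coercive, i.e. ℒ(w,v) → ∞ as ‖v‖_V → ∞. -/

import Mathlib

open Filter Topology

/-- Clarke generalized directional derivative of `j` at `x` in direction `v`. -/
noncomputable def clarkeDeriv {Y : Type*} [NormedAddCommGroup Y] [NormedSpace ℝ Y]
    (j : Y → ℝ) (x v : Y) : ℝ :=
  Filter.limsup (fun p : Y × ℝ => (j (p.1 + p.2 • v) - j p.1) / p.2)
    ((nhds x) ×ˢ (nhdsWithin (0 : ℝ) (Set.Ioi (0 : ℝ))))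

/-- Clarke generalized subdifferential of `j` at `x`. -/
noncomputable def clarkeSubdiff {Y : Type*} [NormedAddCommGroup Y] [NormedSpace ℝ Y]
    (j : Y → ℝ) (x : Y) : Set (Y →L[ℝ] ℝ) :=
  {ξ : Y →L[ℝ] ℝ | ∀ v : Y, ξ v ≤ clarkeDeriv j x v}

set_option linter.unusedSectionVars false

open Set Metric

namespace ClarkeAux

variable {Y : Type*} [NormedAddCommGroup Y] [NormedSpace ℝ Y]

/-- The difference quotient. -/
noncomputable def Cq (j : Y → ℝ) (v : Y) : Y × ℝ → ℝ :=
  fun p => (j (p.1 + p.2 • v) - j p.1) / p.2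

/-- The Clarke filter. -/
def CF (x : Y) : Filter (Y × ℝ) := (nhds x) ×ˢ (nhdsWithin (0 : ℝ) (Set.Ioi (0 : ℝ)))

lemma clarkeDeriv_eq (j : Y → ℝ) (x v : Y) : clarkeDeriv j x v = limsup (Cq j v) (CF x) := rfl

instance (x : Y) : (CF x).NeBot := by
  unfold CF
  infer_instance

variable {j : Y → ℝ} {K : NNReal} {x : Y} {r : ℝ}

lemma ev_bound (hj : LipschitzOnWith K j (ball x r)) (hr : 0 < r) (v : Y) :
    ∀ᶠ p in CF x, |Cq j v p| ≤ (K : ℝ) * ‖v‖ := by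
  have h1 : ball x (r/2) ∈ 𝓝 x := ball_mem_nhds _ (by positivity)
  have h2 : Set.Ioo (0:ℝ) (r/(2*(‖v‖+1))) ∈ 𝓝[>] (0:ℝ) :=
    Ioo_mem_nhdsGT_of_mem ⟨le_refl 0, by positivity⟩
  have hv1 : (0:ℝ) < ‖v‖ + 1 := by positivity
  filter_upwards [Filter.prod_mem_prod h1 h2] with p hp
  obtain ⟨hy, hl⟩ := hp
  obtain ⟨hl0, hlr⟩ := hl
  have hy' : p.1 ∈ ball x r := by
    rw [mem_ball] at hy ⊢; linarith
  have hstep : ‖p.2 • v‖ < r / 2 := by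
    rw [norm_smul, Real.norm_eq_abs, abs_of_pos hl0]
    have : p.2 * ‖v‖ ≤ p.2 * (‖v‖ + 1) := by nlinarith
    have h3 := mul_lt_mul_of_pos_right hlr hv1
    have h4 : r / (2 * (‖v‖+1)) * (‖v‖+1) = r / 2 := by field_simp
    linarith
  have hyv : p.1 + p.2 • v ∈ ball x r := by
    rw [mem_ball] at hy ⊢
    calc dist (p.1 + p.2 • v) x ≤ dist (p.1 + p.2 • v) p.1 + dist p.1 x := dist_triangle _ _ _
      _ < r/2 + r/2 := by
          rw [dist_eq_norm, add_sub_cancel_left]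
          exact add_lt_add hstep hy
      _ = r := by ring
  have hd := (lipschitzOnWith_iff_dist_le_mul.mp hj) _ hyv _ hy'
  rw [Real.dist_eq, dist_eq_norm, add_sub_cancel_left, norm_smul, Real.norm_eq_abs,
    abs_of_pos hl0] at hd
  unfold Cq
  rw [abs_div, abs_of_pos hl0, div_le_iff₀ hl0]
  calc |j (p.1 + p.2 • v) - j p.1| ≤ (K:ℝ) * (p.2 * ‖v‖) := hd
    _ = (K:ℝ) * ‖v‖ * p.2 := by ring

lemma bdd_above (hj : LipschitzOnWith K j (ball x r)) (hr : 0 < r) (v : Y) :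
    IsBoundedUnder (· ≤ ·) (CF x) (Cq j v) :=
  isBoundedUnder_of_eventually_le ((ev_bound hj hr v).mono fun _ h => (abs_le.mp h).2)

lemma bdd_below (hj : LipschitzOnWith K j (ball x r)) (hr : 0 < r) (v : Y) :
    IsBoundedUnder (· ≥ ·) (CF x) (Cq j v) :=
  isBoundedUnder_of_eventually_ge ((ev_bound hj hr v).mono fun _ h => (abs_le.mp h).1)

lemma cobdd (hj : LipschitzOnWith K j (ball x r)) (hr : 0 < r) (v : Y) :
    IsCoboundedUnder (· ≤ ·) (CF x) (Cq j v) :=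
  isCoboundedUnder_le_of_eventually_le _ ((ev_bound hj hr v).mono fun _ h => (abs_le.mp h).1)

/-- L1 : upper bound on the Clarke derivative. -/
lemma clarkeDeriv_le (hj : LipschitzOnWith K j (ball x r)) (hr : 0 < r) (v : Y) :
    clarkeDeriv j x v ≤ (K : ℝ) * ‖v‖ := by
  rw [clarkeDeriv_eq]
  exact limsup_le_of_le (cobdd hj hr v) ((ev_bound hj hr v).mono fun _ h => (abs_le.mp h).2)

/-- L2 : the one-sided Dini upper derivative is at most the Clarke derivative. -/
lemma dini_le (hj : LipschitzOnWith K j (ball x r)) (hr : 0 < r) (v : Y) :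
    limsup (fun l : ℝ => (j (x + l • v) - j x) / l) (𝓝[>] (0:ℝ)) ≤ clarkeDeriv j x v := by
  have hm : Tendsto (fun l : ℝ => ((x, l) : Y × ℝ)) (𝓝[>] (0:ℝ)) (CF x) :=
    tendsto_const_nhds.prodMk tendsto_id
  have heq : (fun l : ℝ => (j (x + l • v) - j x) / l)
      = Cq j v ∘ (fun l : ℝ => ((x, l) : Y × ℝ)) := rfl
  rw [clarkeDeriv_eq, heq, limsup_comp]
  haveI : (map (fun l : ℝ => ((x, l) : Y × ℝ)) (𝓝[>] (0:ℝ))).NeBot := map_neBot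
  refine limsup_le_limsup_of_le hm ?_ (bdd_above hj hr v)
  refine isCoboundedUnder_le_of_eventually_le _ (x := -((K:ℝ) * ‖v‖)) ?_
  rw [eventually_map]
  exact (hm.eventually (ev_bound hj hr v)).mono fun l h => (abs_le.mp h).1

lemma tendsto_mc (x : Y) {c : ℝ} (hc : 0 < c) :
    Tendsto (fun p : Y × ℝ => ((p.1, c * p.2) : Y × ℝ)) (CF x) (CF x) := by
  unfold CF
  refine Tendsto.prodMk tendsto_fst ?_
  rw [tendsto_nhdsWithin_iff]
  constructor
  · have h : Tendsto (fun p : Y × ℝ => p.2) ((𝓝 x) ×ˢ (𝓝[>] (0:ℝ))) (𝓝 (0:ℝ)) :=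
      tendsto_snd.mono_right nhdsWithin_le_nhds
    simpa using h.const_mul c
  · exact tendsto_snd.eventually (eventually_mem_nhdsWithin.mono fun l hl => mul_pos hc hl)

lemma map_mc (x : Y) {c : ℝ} (hc : 0 < c) :
    map (fun p : Y × ℝ => ((p.1, c * p.2) : Y × ℝ)) (CF x) = CF x := by
  refine le_antisymm (tendsto_mc x hc) ?_
  have h2 := tendsto_mc x (show (0:ℝ) < c⁻¹ by positivity)
  have key : CF x = map (fun p : Y × ℝ => ((p.1, c * p.2) : Y × ℝ))
      (map (fun p : Y × ℝ => ((p.1, c⁻¹ * p.2) : Y × ℝ)) (CF x)) := by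
    rw [Filter.map_map]
    have he : ((fun p : Y × ℝ => ((p.1, c * p.2) : Y × ℝ)) ∘
        (fun p : Y × ℝ => ((p.1, c⁻¹ * p.2) : Y × ℝ))) = id := by
      funext p
      simp [Function.comp, ← mul_assoc, mul_inv_cancel₀ hc.ne']
    rw [he, Filter.map_id]
  exact key.le.trans (Filter.map_mono h2)

/-- L3 : positive homogeneity. -/
lemma clarkeDeriv_smul (hj : LipschitzOnWith K j (ball x r)) (hr : 0 < r) (v : Y)
    {c : ℝ} (hc : 0 < c) :
    clarkeDeriv j x (c • v) = c * clarkeDeriv j x v := by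
  have hq : Cq j (c • v) = fun p : Y × ℝ => c * Cq j v (p.1, c * p.2) := by
    funext p
    unfold Cq
    rcases eq_or_ne p.2 0 with h | h
    · simp [h]
    · have hsm : p.1 + p.2 • c • v = p.1 + (c * p.2) • v := by
        rw [smul_smul, mul_comm]
      rw [hsm]
      field_simp
  have hbdd : ∀ᶠ p in CF x, |Cq j v ((p.1, c * p.2) : Y × ℝ)| ≤ (K:ℝ) * ‖v‖ :=
    (tendsto_mc x hc).eventually (ev_bound hj hr v)
  have hu : IsBoundedUnder (· ≤ ·) (CF x) (fun p : Y × ℝ => Cq j v (p.1, c * p.2)) :=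
    isBoundedUnder_of_eventually_le (hbdd.mono fun _ h => (abs_le.mp h).2)
  have hu_co : IsCoboundedUnder (· ≤ ·) (CF x) (fun p : Y × ℝ => Cq j v (p.1, c * p.2)) :=
    isCoboundedUnder_le_of_eventually_le _ (hbdd.mono fun _ h => (abs_le.mp h).1)
  have hgu : IsBoundedUnder (· ≤ ·) (CF x) (fun p : Y × ℝ => c * Cq j v (p.1, c * p.2)) := by
    refine isBoundedUnder_of_eventually_le (a := c * ((K:ℝ) * ‖v‖)) ?_
    exact hbdd.mono fun p h => by nlinarith [(abs_le.mp h).2, (abs_le.mp h).1]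
  have hgu_co : IsCoboundedUnder (· ≤ ·) (CF x)
      (fun p : Y × ℝ => c * Cq j v (p.1, c * p.2)) := by
    refine isCoboundedUnder_le_of_eventually_le _ (x := c * (-((K:ℝ) * ‖v‖))) ?_
    exact hbdd.mono fun p h => by nlinarith [(abs_le.mp h).1]
  have hiso := (OrderIso.mulLeft₀ c hc).limsup_apply (f := CF x)
    (u := fun p : Y × ℝ => Cq j v (p.1, c * p.2)) hu hu_co hgu hgu_co
  simp only [OrderIso.mulLeft₀_apply] at hiso
  have hcomp : (fun p : Y × ℝ => Cq j v (p.1, c * p.2))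
      = Cq j v ∘ (fun p : Y × ℝ => ((p.1, c * p.2) : Y × ℝ)) := rfl
  calc clarkeDeriv j x (c • v)
      = limsup (fun p : Y × ℝ => c * Cq j v (p.1, c * p.2)) (CF x) := by
        rw [clarkeDeriv_eq, hq]
    _ = c * limsup (fun p : Y × ℝ => Cq j v (p.1, c * p.2)) (CF x) := hiso.symm
    _ = c * limsup (Cq j v) (CF x) := by
        rw [hcomp, limsup_comp, map_mc x hc]
    _ = c * clarkeDeriv j x v := by rw [clarkeDeriv_eq]

/-- L4 : `0 ≤ j⁰(x; v) + j⁰(x; -v)`. -/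
lemma clarkeDeriv_add_neg_nonneg (hj : LipschitzOnWith K j (ball x r)) (hr : 0 < r) (v : Y) :
    0 ≤ clarkeDeriv j x v + clarkeDeriv j x (-v) := by
  set m : Y × ℝ → Y × ℝ := fun p => (p.1 + p.2 • v, p.2) with hm_def
  have hm : Tendsto m (CF x) (CF x) := by
    unfold CF
    refine Tendsto.prodMk ?_ tendsto_snd
    have h1 : Tendsto (fun p : Y × ℝ => p.2) ((𝓝 x) ×ˢ (𝓝[>] (0:ℝ))) (𝓝 (0:ℝ)) :=
      tendsto_snd.mono_right nhdsWithin_le_nhds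
    have h2 : Tendsto (fun p : Y × ℝ => p.2 • v) ((𝓝 x) ×ˢ (𝓝[>] (0:ℝ))) (𝓝 (0:Y)) := by
      simpa using h1.smul_const v
    simpa using tendsto_fst.add h2
  have hzero : (Cq j v + fun p : Y × ℝ => Cq j (-v) (m p)) = fun _ => (0:ℝ) := by
    funext p
    have hpt : p.1 + p.2 • v + p.2 • (-v) = p.1 := by rw [smul_neg]; abel
    show Cq j v p + Cq j (-v) (m p) = 0
    unfold Cq
    simp only [hm_def]
    rw [hpt, ← add_div,
      show j (p.1 + p.2 • v) - j p.1 + (j p.1 - j (p.1 + p.2 • v)) = 0 by ring, zero_div]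
  have evm : ∀ᶠ p in CF x, |Cq j (-v) (m p)| ≤ (K:ℝ) * ‖-v‖ :=
    hm.eventually (ev_bound hj hr (-v))
  have h3 : IsCoboundedUnder (· ≤ ·) (CF x) (fun p : Y × ℝ => Cq j (-v) (m p)) :=
    isCoboundedUnder_le_of_eventually_le _ (evm.mono fun _ h => (abs_le.mp h).1)
  have h4 : IsBoundedUnder (· ≤ ·) (CF x) (fun p : Y × ℝ => Cq j (-v) (m p)) :=
    isBoundedUnder_of_eventually_le (evm.mono fun _ h => (abs_le.mp h).2)
  have hsum := limsup_add_le (bdd_below hj hr v) (bdd_above hj hr v) h3 h4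
  rw [hzero, limsup_const] at hsum
  have hmap : limsup (fun p : Y × ℝ => Cq j (-v) (m p)) (CF x) ≤ clarkeDeriv j x (-v) := by
    rw [clarkeDeriv_eq]
    have hcomp : (fun p : Y × ℝ => Cq j (-v) (m p)) = Cq j (-v) ∘ m := rfl
    rw [hcomp, limsup_comp]
    haveI : (map m (CF x)).NeBot := map_neBot
    refine limsup_le_limsup_of_le hm ?_ (bdd_above hj hr (-v))
    refine isCoboundedUnder_le_of_eventually_le _ (x := -((K:ℝ) * ‖-v‖)) ?_
    rw [eventually_map]
    exact evm.mono fun p h => (abs_le.mp h).1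
  rw [clarkeDeriv_eq j x v]
  linarith

lemma exists_ball_of_locallyLipschitz (h : LocallyLipschitz j) (x : Y) :
    ∃ K : NNReal, ∃ r : ℝ, 0 < r ∧ LipschitzOnWith K j (ball x r) := by
  obtain ⟨K, t, ht, hK⟩ := h x
  obtain ⟨r, hr, hball⟩ := Metric.mem_nhds_iff.mp ht
  exact ⟨K, r, hr, hK.mono hball⟩

/-- Eventual bound on the one-sided difference quotients. -/
lemma ev_bound_line (hj : LipschitzOnWith K j (ball x r)) (hr : 0 < r) (v : Y) :
    ∀ᶠ l in 𝓝[>] (0:ℝ), |(j (x + l • v) - j x) / l| ≤ (K:ℝ) * ‖v‖ := by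
  have hm : Tendsto (fun l : ℝ => ((x, l) : Y × ℝ)) (𝓝[>] (0:ℝ)) (CF x) :=
    tendsto_const_nhds.prodMk tendsto_id
  exact hm.eventually (ev_bound hj hr v)

end ClarkeAux

set_option maxHeartbeats 1000000 in
open ClarkeAux in
theorem stmt2
    {V : Type*} [NormedAddCommGroup V] [NormedSpace ℝ V] [CompleteSpace V]
    {X : Type*} [NormedAddCommGroup X] [NormedSpace ℝ X] [CompleteSpace X]
    (hV_refl : Function.Surjective (NormedSpace.inclusionInDoubleDual ℝ V))
    (A : V → V →L[ℝ] ℝ) (F_A : V → ℝ) (L_A : ℝ) (hL_A : 0 < L_A)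
    (hA_lip : ∀ u v : V, ‖A u - A v‖ ≤ L_A * ‖u - v‖)
    (hA_pot : ∀ u v : V, HasLineDerivAt ℝ F_A (A u v) u v)
    (m_A : ℝ) (hm_A : 0 < m_A)
    (hA_mono : ∀ u v : V, m_A * ‖u - v‖ ^ 2 ≤ (A u - A v) (u - v))
    (J : X → X → ℝ)
    (hJ_lip : ∀ w : X, LocallyLipschitz (J w))
    (c₀ c₁ c₂ : ℝ) (hc₀ : 0 ≤ c₀) (hc₁ : 0 ≤ c₁) (hc₂ : 0 ≤ c₂)
    (hJ_bdd : ∀ w v : X, ∀ ξ ∈ clarkeSubdiff (J w) v, ‖ξ‖ ≤ c₀ + c₁ * ‖v‖ + c₂ * ‖w‖)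
    (m_α m_L : ℝ) (hm_α : 0 ≤ m_α) (hm_L : 0 ≤ m_L)
    (hJ_mono : ∀ w₁ w₂ v₁ v₂ : X,
      clarkeDeriv (J w₁) v₁ (v₂ - v₁) + clarkeDeriv (J w₂) v₂ (v₁ - v₂)
        ≤ m_α * ‖v₁ - v₂‖ ^ 2 + m_L * ‖w₁ - w₂‖ * ‖v₁ - v₂‖)
    (γ : V →L[ℝ] X) (f : V →L[ℝ] ℝ)
    (hs : (m_α + m_L) * ‖γ‖ ^ 2 < m_A)
    (w : V) :
    Filter.Tendsto (fun v : V => F_A v - f v + J (γ w) (γ v))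
      (Filter.comap (fun v : V => ‖v‖) Filter.atTop) Filter.atTop := by
  -- Part 1 : lower bound for `F_A`.
  have hφ : ∀ v : V, ∀ t : ℝ, HasDerivAt (fun t : ℝ => F_A (t • v)) ((A (t • v)) v) t := by
    intro v t₀
    have h : HasDerivAt (fun s : ℝ => F_A (t₀ • v + s • v)) (A (t₀ • v) v) 0 := hA_pot (t₀ • v) v
    have h' : HasDerivAt (fun s : ℝ => F_A (t₀ • v + s • v)) (A (t₀ • v) v) (t₀ - t₀) := by
      rwa [sub_self]
    have h2 := h'.comp_sub_const t₀ t₀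
    have hfe : (fun t : ℝ => F_A (t₀ • v + (t - t₀) • v))
        = fun t : ℝ => F_A (t • v) := by
      funext t
      congr 1
      rw [sub_smul]
      abel
    rw [hfe] at h2
    exact h2
  have h1 : ∀ v : V, F_A 0 + A 0 v + m_A / 2 * ‖v‖ ^ 2 ≤ F_A v := by
    intro v
    set ψ : ℝ → ℝ := fun t => F_A (t • v) - A 0 v * t - m_A * ‖v‖ ^ 2 * (t ^ 2 / 2) with hψdef
    have hψ : ∀ t : ℝ, HasDerivAt ψ (A (t • v) v - A 0 v - m_A * ‖v‖ ^ 2 * t) t := by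
      intro t
      have h2 : HasDerivAt (fun t : ℝ => A 0 v * t) (A 0 v) t := by
        simpa using (hasDerivAt_id t).const_mul (A 0 v)
      have h3 : HasDerivAt (fun t : ℝ => m_A * ‖v‖ ^ 2 * (t ^ 2 / 2)) (m_A * ‖v‖ ^ 2 * t) t := by
        have h := ((hasDerivAt_pow 2 t).div_const 2).const_mul (m_A * ‖v‖ ^ 2)
        refine h.congr_deriv ?_
        norm_num
      exact ((hφ v t).sub h2).sub h3
    have hdiff : Differentiable ℝ ψ := fun t => (hψ t).differentiableAt
    have hmono : MonotoneOn ψ (Icc (0:ℝ) 1) := by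
      apply monotoneOn_of_deriv_nonneg (convex_Icc 0 1) hdiff.continuous.continuousOn
        (hdiff.differentiableOn)
      intro t ht
      rw [interior_Icc] at ht
      rw [(hψ t).deriv]
      obtain ⟨ht0, ht1⟩ := ht
      have hA := hA_mono (t • v) 0
      simp only [sub_zero] at hA
      rw [ContinuousLinearMap.sub_apply] at hA
      have happ : A (t • v) (t • v) = t * A (t • v) v := by
        rw [map_smul]; rfl
      have happ0 : A 0 (t • v) = t * A 0 v := by
        rw [map_smul]; rfl
      have hnorm : ‖t • v‖ ^ 2 = t ^ 2 * ‖v‖ ^ 2 := by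
        rw [norm_smul, Real.norm_eq_abs, mul_pow, sq_abs]
      rw [happ, happ0, hnorm] at hA
      nlinarith [hA, ht0, sq_nonneg ‖v‖]
    have hkey := hmono (left_mem_Icc.mpr zero_le_one) (right_mem_Icc.mpr zero_le_one) zero_le_one
    have hψ0 : ψ 0 = F_A 0 := by simp [hψdef]
    have hψ1 : ψ 1 = F_A v - A 0 v - m_A * ‖v‖ ^ 2 / 2 := by
      simp [hψdef]
      ring
    rw [hψ0, hψ1] at hkey
    linarith
  -- Part 2 : lower bound for `J (γ w)`.
  obtain ⟨K₀, r₀, hr₀, hK₀⟩ := exists_ball_of_locallyLipschitz (hJ_lip (γ w)) (0 : X)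
  have h2 : ∀ u : X, J (γ w) 0 - (K₀:ℝ) * ‖u‖ - m_α * ‖u‖ ^ 2 / 2 ≤ J (γ w) u := by
    intro u
    set g : ℝ → ℝ := fun t => J (γ w) ((1 - t) • u) with hgdef
    set B : ℝ → ℝ := fun t => g 0 + (K₀:ℝ) * ‖u‖ * t + m_α * ‖u‖ ^ 2 * (t - t ^ 2 / 2) with hBdef
    have hgc : ContinuousOn g (Icc (0:ℝ) 1) :=
      (((hJ_lip (γ w)).continuous).comp
        ((continuous_const.sub continuous_id).smul continuous_const)).continuousOn
    have hBc : ContinuousOn B (Icc (0:ℝ) 1) := by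
      apply Continuous.continuousOn
      fun_prop
    have hB' : ∀ t ∈ Ico (0:ℝ) 1,
        HasDerivWithinAt B (m_α * (1 - t) * ‖u‖ ^ 2 + (K₀:ℝ) * ‖u‖) (Ici t) t := by
      intro t _
      have hlin : HasDerivAt (fun t : ℝ => g 0 + (K₀:ℝ) * ‖u‖ * t) ((K₀:ℝ) * ‖u‖ * 1) t :=
        ((hasDerivAt_id t).const_mul ((K₀:ℝ) * ‖u‖)).const_add (g 0)
      have hquad : HasDerivAt (fun t : ℝ => m_α * ‖u‖ ^ 2 * (t - t ^ 2 / 2))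
          (m_α * ‖u‖ ^ 2 * (1 - 2 * t ^ (2 - 1) / 2)) t :=
        ((hasDerivAt_id t).sub ((hasDerivAt_pow 2 t).div_const 2)).const_mul (m_α * ‖u‖ ^ 2)
      have hB : HasDerivAt B ((K₀:ℝ) * ‖u‖ * 1 + m_α * ‖u‖ ^ 2 * (1 - 2 * t ^ (2 - 1) / 2)) t :=
        hlin.add hquad
      have heqd : (K₀:ℝ) * ‖u‖ * 1 + m_α * ‖u‖ ^ 2 * (1 - 2 * t ^ (2 - 1) / 2)
          = m_α * (1 - t) * ‖u‖ ^ 2 + (K₀:ℝ) * ‖u‖ := by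
        ring
      rw [heqd] at hB
      exact hB.hasDerivWithinAt
    have bound : ∀ t ∈ Ico (0:ℝ) 1, ∀ ρ : ℝ,
        (m_α * (1 - t) * ‖u‖ ^ 2 + (K₀:ℝ) * ‖u‖) < ρ → ∃ᶠ z in 𝓝[>] t, slope g t z < ρ := by
      intro t ht ρ hρ
      obtain ⟨ht0, ht1⟩ := ht
      have hs0 : (0:ℝ) < 1 - t := by linarith
      set xt : X := (1 - t) • u with hxtdef
      obtain ⟨Kt, rt, hrt, hKt⟩ := exists_ball_of_locallyLipschitz (hJ_lip (γ w)) xt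
      -- bound on the Clarke derivative at `xt` in direction `-u`
      have hhom := clarkeDeriv_smul hKt hrt (-u) hs0
      have hsmeq : (1 - t) • (-u) = -xt := by rw [hxtdef, smul_neg]
      have hmono := hJ_mono (γ w) (γ w) 0 xt
      simp only [sub_zero, zero_sub, sub_self, norm_zero, norm_neg, mul_zero, zero_mul,
        add_zero] at hmono
      have hneg := clarkeDeriv_add_neg_nonneg hK₀ hr₀ xt
      have hub := clarkeDeriv_le hK₀ hr₀ (-xt)
      rw [norm_neg] at hub
      have hxt_norm : ‖xt‖ = (1 - t) * ‖u‖ := by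
        rw [hxtdef, norm_smul, Real.norm_eq_abs, abs_of_pos hs0]
      have hfin : clarkeDeriv (J (γ w)) xt (-u)
          ≤ m_α * (1 - t) * ‖u‖ ^ 2 + (K₀:ℝ) * ‖u‖ := by
        have h5 : (1 - t) * clarkeDeriv (J (γ w)) xt (-u)
            ≤ m_α * ((1 - t) * ‖u‖) ^ 2 + (K₀:ℝ) * ((1 - t) * ‖u‖) := by
          rw [← hhom, hsmeq]
          rw [hxt_norm] at hmono hub
          linarith [hmono, hneg, hub]
        nlinarith [h5, hs0, norm_nonneg u, K₀.coe_nonneg]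
      have hdini := dini_le hKt hrt (-u)
      have hbdd : IsBoundedUnder (· ≤ ·) (𝓝[>] (0:ℝ))
          (fun l : ℝ => (J (γ w) (xt + l • (-u)) - J (γ w) xt) / l) :=
        isBoundedUnder_of_eventually_le
          ((ev_bound_line hKt hrt (-u)).mono fun _ h => (abs_le.mp h).2)
      have hev : ∀ᶠ l in 𝓝[>] (0:ℝ), (J (γ w) (xt + l • (-u)) - J (γ w) xt) / l < ρ :=
        eventually_lt_of_limsup_lt (lt_of_le_of_lt (hdini.trans hfin) hρ) hbdd
      have htr : Tendsto (fun z : ℝ => z - t) (𝓝[>] t) (𝓝[>] (0:ℝ)) := by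
        rw [tendsto_nhdsWithin_iff]
        constructor
        · have h := ((continuous_sub_right t).tendsto t).mono_left
            (nhdsWithin_le_nhds (s := Set.Ioi t))
          simpa using h
        · exact eventually_mem_nhdsWithin.mono fun z hz => Set.mem_Ioi.mpr (sub_pos.mpr hz)
      refine ((htr.eventually hev).mono ?_).frequently
      intro z hz
      have hgz : g z = J (γ w) (xt + (z - t) • (-u)) := by
        rw [hgdef]
        show J (γ w) ((1 - z) • u) = J (γ w) (xt + (z - t) • (-u))
        congr 1
        rw [hxtdef, smul_neg, ← sub_eq_add_neg, ← sub_smul]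
        congr 1
        ring
      have hgt : g t = J (γ w) xt := rfl
      rw [slope_def_field, hgz, hgt]
      exact hz
    have hfinal := image_le_of_liminf_slope_right_le_deriv_boundary hgc
      (by simp [hBdef]) hBc hB' bound (right_mem_Icc.mpr zero_le_one)
    have hg1 : g 1 = J (γ w) 0 := by
      rw [hgdef]
      norm_num
    have hg0 : g 0 = J (γ w) u := by
      rw [hgdef]
      norm_num
    have hB1 : B 1 = g 0 + (K₀:ℝ) * ‖u‖ + m_α * ‖u‖ ^ 2 / 2 := by
      rw [hBdef]
      ring_nf
    rw [hg1, hB1, hg0] at hfinal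
    linarith
  -- Part 3 : assembly.
  set c : ℝ := (m_A - m_α * ‖γ‖ ^ 2) / 2 with hcdef
  have hc : 0 < c := by
    have h := mul_nonneg hm_L (sq_nonneg ‖γ‖)
    rw [hcdef]
    nlinarith [hs]
  set d : ℝ := ‖A 0‖ + ‖f‖ + (K₀:ℝ) * ‖γ‖ with hddef
  set e : ℝ := F_A 0 + J (γ w) 0 with hedef
  have hineq : ∀ v : V, e - d * ‖v‖ + c * ‖v‖ ^ 2 ≤ F_A v - f v + J (γ w) (γ v) := by
    intro v
    have hFA := h1 v
    have hJv := h2 (γ v)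
    have hA0 : |A 0 v| ≤ ‖A 0‖ * ‖v‖ := by
      have h := (A 0).le_opNorm v
      rwa [Real.norm_eq_abs] at h
    have hfv : |f v| ≤ ‖f‖ * ‖v‖ := by
      have h := f.le_opNorm v
      rwa [Real.norm_eq_abs] at h
    have hγv : ‖γ v‖ ≤ ‖γ‖ * ‖v‖ := γ.le_opNorm v
    have hγv2 : ‖γ v‖ ^ 2 ≤ ‖γ‖ ^ 2 * ‖v‖ ^ 2 := by
      have h := pow_le_pow_left₀ (norm_nonneg (γ v)) hγv 2
      calc ‖γ v‖ ^ 2 ≤ (‖γ‖ * ‖v‖) ^ 2 := h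
        _ = ‖γ‖ ^ 2 * ‖v‖ ^ 2 := by ring
    have hK0 : (0:ℝ) ≤ (K₀:ℝ) := K₀.coe_nonneg
    have e1 := (abs_le.mp hA0).1
    have e2 := (abs_le.mp hfv).2
    have hKγ : (K₀:ℝ) * ‖γ v‖ ≤ (K₀:ℝ) * (‖γ‖ * ‖v‖) := mul_le_mul_of_nonneg_left hγv hK0
    have hαγ : m_α * ‖γ v‖ ^ 2 ≤ m_α * (‖γ‖ ^ 2 * ‖v‖ ^ 2) := mul_le_mul_of_nonneg_left hγv2 hm_α
    rw [hedef, hddef, hcdef]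
    nlinarith [hFA, hJv, e1, e2, hKγ, hαγ]
  have hρ : Tendsto (fun r : ℝ => e - d * r + c * r ^ 2) atTop atTop := by
    have h1' : Tendsto (fun r : ℝ => c * r - d) atTop atTop := by
      have h := tendsto_atTop_add_const_right atTop (-d) (Tendsto.const_mul_atTop hc tendsto_id)
      exact h.congr fun r => by simp only [id_eq]; ring
    have h2' : Tendsto (fun r : ℝ => r * (c * r - d)) atTop atTop :=
      Tendsto.atTop_mul_atTop₀ tendsto_id h1'
    have h3' := tendsto_atTop_add_const_left atTop e h2'
    exact h3'.congr fun r => by ring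
  have hcomp : Tendsto (fun v : V => e - d * ‖v‖ + c * ‖v‖ ^ 2)
      (comap (fun v : V => ‖v‖) atTop) atTop := hρ.comp tendsto_comap
  exact tendsto_atTop_mono hineq hcomp
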